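/- For all real numbers r₁, r₂, r₃, the symmetric 3×3 matrix H(r) with diagonal entries H₁₁ = H₂₂ = H₃₃ = 2r₁²+2r₂²+2r₃² and off-diagonal entries H₁₂ = r₃²−r₁²−r₂²−2r₁r₂, H₁₃ = r₂²−r₁²−r₃²−2r₁r₃, H₂₃ = r₁²−r₂²−r₃²−2r₂r₃ is positive semidefinite. -/

import Mathlib

theorem stmt_4 (r₁ r₂ r₃ : ℝ) :
    (!![2 * r₁ ^ 2 + 2 * r₂ ^ 2 + 2 * r₃ ^ 2,
        r₃ ^ 2 - r₁ ^ 2 - r₂ ^ 2 - 2 * r₁ * r₂,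
        r₂ ^ 2 - r₁ ^ 2 - r₃ ^ 2 - 2 * r₁ * r₃;
        r₃ ^ 2 - r₁ ^ 2 - r₂ ^ 2 - 2 * r₁ * r₂,
        2 * r₁ ^ 2 + 2 * r₂ ^ 2 + 2 * r₃ ^ 2,
        r₁ ^ 2 - r₂ ^ 2 - r₃ ^ 2 - 2 * r₂ * r₃;
        r₂ ^ 2 - r₁ ^ 2 - r₃ ^ 2 - 2 * r₁ * r₃,
        r₁ ^ 2 - r₂ ^ 2 - r₃ ^ 2 - 2 * r₂ * r₃,
        2 * r₁ ^ 2 + 2 * r₂ ^ 2 + 2 * r₃ ^ 2] : Matrix (Fin 3) (Fin 3) ℝ).PosSemidef := by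
  refine Matrix.posSemidef_iff_dotProduct_mulVec.mpr ⟨?_, ?_⟩
  · ext i j
    fin_cases i <;> fin_cases j <;>
      simp [Matrix.conjTranspose_apply]
  · intro x
    have h := x
    set a := x 0 with ha
    set b := x 1 with hb
    set c := x 2 with hc
    simp [Matrix.mulVec, dotProduct, Fin.sum_univ_three, ← ha, ← hb, ← hc]
    nlinarith [sq_nonneg (2*r₁*a - r₁*b - r₁*c - r₂*b + r₂*c + r₃*b - r₃*c),
      sq_nonneg (3*r₁*b + r₁*c - 2*r₂*a - r₂*b - r₂*c - 2*r₃*a + r₃*b + r₃*c),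
      sq_nonneg (2*r₁*c - r₂*a + r₂*b + r₂*c - r₃*a - r₃*b - r₃*c),
      sq_nonneg (r₂*a - r₂*b + r₂*c - r₃*a - r₃*b + r₃*c)]
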